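/- Let V be a finite set with at least 6 elements and f : V × V → {1,-1} symmetric. Suppose the fraction of 4-tuples (i,j,k,ℓ) of distinct vertices with f(i,j)·f(j,k)·f(k,ℓ)·f(ℓ,i) ≠ 1 is at most p. Then there exist θ ∈ {1,-1} and α : V → {1,-1} such that the fraction of ordered pairs (i,j) of distinct vertices with f(i,j) ≠ θ·α(i)·α(j) is at most 3p. -/

import Mathlib

/-- Pairwise distinctness of the four vertices of a square. -/
def SqDistinct4 {V : Type*} (t : V × V × V × V) : Prop :=
  t.1 ≠ t.2.1 ∧ t.1 ≠ t.2.2.1 ∧ t.1 ≠ t.2.2.2 ∧ t.2.1 ≠ t.2.2.1 ∧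
    t.2.1 ≠ t.2.2.2 ∧ t.2.2.1 ≠ t.2.2.2

instance {V : Type*} [DecidableEq V] : DecidablePred (SqDistinct4 (V := V)) := fun _ =>
  by unfold SqDistinct4; infer_instance

open Finset

namespace ST19

variable {V : Type*} [Fintype V] [DecidableEq V]

set_option linter.unusedSectionVars false

def tf (f : V → V → ℤˣ) (a b c : V) : ℤˣ := f a b * f b c * f c a

def cm (f : V → V → ℤˣ) (i k : V) : ℕ :=
  (univ.filter fun j => j ≠ i ∧ j ≠ k ∧ tf f i j k = -1).card

def cp (f : V → V → ℤˣ) (i k : V) : ℕ :=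
  (univ.filter fun j => j ≠ i ∧ j ≠ k ∧ tf f i j k = 1).card

def gam (f : V → V → ℤˣ) (i k : V) : ℕ := min (cm f i k) (cp f i k)

def gB (f : V → V → ℤˣ) (i k : V) : Bool := decide (cp f i k ≤ cm f i k)

def dgT (f : V → V → ℤˣ) (r : V) : ℕ := (univ.filter fun x => x ≠ r ∧ gB f r x = true).card

def dgF (f : V → V → ℤˣ) (r : V) : ℕ := (univ.filter fun x => x ≠ r ∧ gB f r x = false).card

def Dm (f : V → V → ℤˣ) (r : V) : ℕ :=
  (univ.filter fun q : V × V => q.1 ≠ q.2 ∧ q.1 ≠ r ∧ q.2 ≠ r ∧ tf f q.1 r q.2 = -1).card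

def Dp (f : V → V → ℤˣ) (r : V) : ℕ :=
  (univ.filter fun q : V × V => q.1 ≠ q.2 ∧ q.1 ≠ r ∧ q.2 ≠ r ∧ tf f q.1 r q.2 = 1).card

def BB (f : V → V → ℤˣ) : ℕ := ∑ i : V, ∑ k ∈ univ.erase i, gam f i k

lemma u_ne_one {u : ℤˣ} : u ≠ 1 ↔ u = -1 := by
  rcases Int.units_eq_one_or u with h | h <;> simp [h]

lemma u_ne_negone {u : ℤˣ} : u ≠ -1 ↔ u = 1 := by
  rcases Int.units_eq_one_or u with h | h <;> simp [h]

lemma mul_ne_one_iff {a b : ℤˣ} : a * b ≠ 1 ↔ a ≠ b := by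
  rcases Int.units_eq_one_or a with h | h <;> rcases Int.units_eq_one_or b with h2 | h2 <;>
    simp [h, h2] <;> decide

lemma tf_rot (f : V → V → ℤˣ) (a b c : V) : tf f a b c = tf f b c a := by
  unfold tf; exact mul_rotate _ _ _

lemma tf_swap (f : V → V → ℤˣ) (hsymm : ∀ i j, f i j = f j i) (a b c : V) :
    tf f a b c = tf f a c b := by
  unfold tf
  rw [hsymm a c, hsymm c b, hsymm b a]
  rw [show f c a * f b c * f a b = f a b * f b c * f c a by ac_rfl]

lemma tf_rot' (f : V → V → ℤˣ) (a b c : V) : tf f a b c = tf f c a b := by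
  rw [tf_rot, tf_rot]

lemma boole_or {A B : Prop} [Decidable A] [Decidable B] (h : ¬(A ∧ B)) :
    (if A ∨ B then (1:ℕ) else 0) = (if A then (1:ℕ) else 0) + (if B then (1:ℕ) else 0) := by
  by_cases hA : A <;> by_cases hB : B <;> simp [hA, hB] <;> tauto

lemma boole_and {A B : Prop} [Decidable A] [Decidable B] :
    (if A ∧ B then (1:ℕ) else 0) = (if A then (1:ℕ) else 0) * (if B then (1:ℕ) else 0) := by
  by_cases hA : A <;> by_cases hB : B <;> simp [hA, hB]

lemma card_filter_ne2 {i k : V} (h : i ≠ k) :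
    (univ.filter fun j => j ≠ i ∧ j ≠ k).card = Fintype.card V - 2 := by
  have : (univ.filter fun j => j ≠ i ∧ j ≠ k) = ((univ : Finset V).erase i).erase k := by
    ext j; simp [mem_erase]; tauto
  rw [this, card_erase_of_mem (by simp [mem_erase, h.symm]), card_erase_of_mem (by simp)]
  simp [Finset.card_univ]; omega

lemma card_filter_ne3 {i k j : V} (h1 : j ≠ i) (h2 : j ≠ k) (h3 : i ≠ k) :
    (univ.filter fun l => l ≠ i ∧ l ≠ k ∧ l ≠ j).card = Fintype.card V - 3 := by
  have : (univ.filter fun l => l ≠ i ∧ l ≠ k ∧ l ≠ j)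
      = (((univ : Finset V).erase i).erase k).erase j := by
    ext l; simp [mem_erase]; tauto
  rw [this, card_erase_of_mem (by simp [mem_erase, h1, h2]),
    card_erase_of_mem (by simp [mem_erase, h3.symm]), card_erase_of_mem (by simp)]
  simp [Finset.card_univ]; omega

lemma cm_add_cp (f : V → V → ℤˣ) {i k : V} (h : i ≠ k) :
    cm f i k + cp f i k = Fintype.card V - 2 := by
  unfold cm cp
  rw [card_filter, card_filter, ← sum_add_distrib]
  have e : ∀ j : V,
      ((if j ≠ i ∧ j ≠ k ∧ tf f i j k = -1 then (1:ℕ) else 0)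
        + (if j ≠ i ∧ j ≠ k ∧ tf f i j k = 1 then (1:ℕ) else 0))
      = if j ≠ i ∧ j ≠ k then 1 else 0 := by
    intro j
    rcases Int.units_eq_one_or (tf f i j k) with h1 | h1 <;>
      by_cases hji : j ≠ i <;> by_cases hjk : j ≠ k <;> simp [h1, hji, hjk]
  rw [sum_congr rfl (fun j _ => e j), ← card_filter, card_filter_ne2 h]

lemma cm_le (f : V → V → ℤˣ) {i k : V} (h : i ≠ k) : cm f i k ≤ Fintype.card V - 2 := by
  have := cm_add_cp f h; omega

lemma cp_le (f : V → V → ℤˣ) {i k : V} (h : i ≠ k) : cp f i k ≤ Fintype.card V - 2 := by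
  have := cm_add_cp f h; omega

lemma Dm_eq (f : V → V → ℤˣ) (r : V) : Dm f r = ∑ x ∈ univ.erase r, cm f r x := by
  unfold Dm
  rw [card_filter]
  rw [Fintype.sum_prod_type]
  have h1 : ∀ x : V, (∑ y : V, if ((x,y).1 ≠ (x,y).2 ∧ (x,y).1 ≠ r ∧ (x,y).2 ≠ r ∧
        tf f (x,y).1 r (x,y).2 = -1) then (1:ℕ) else 0)
      = if x = r then 0 else cm f r x := by
    intro x
    by_cases hx : x = r
    · simp [hx]
    · rw [if_neg hx]
      unfold cm
      rw [card_filter]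
      apply sum_congr rfl
      intro y _
      refine if_congr ?_ rfl rfl
      constructor
      · rintro ⟨a, b, c, d⟩
        exact ⟨c, fun hyx => a hyx.symm, by rw [← tf_rot]; exact d⟩
      · rintro ⟨a, b, c⟩
        exact ⟨fun hxy => b hxy.symm, hx, a, by rw [tf_rot]; exact c⟩
  rw [sum_congr rfl (fun x _ => h1 x)]
  rw [← Finset.sum_erase (univ : Finset V) (f := fun x => if x = r then 0 else cm f r x)
    (by simp : (if r = r then 0 else cm f r r) = 0)]
  apply sum_congr rfl
  intro x hx
  rw [if_neg (mem_erase.mp hx).1]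

lemma Dp_eq (f : V → V → ℤˣ) (r : V) : Dp f r = ∑ x ∈ univ.erase r, cp f r x := by
  unfold Dp
  rw [card_filter]
  rw [Fintype.sum_prod_type]
  have h1 : ∀ x : V, (∑ y : V, if ((x,y).1 ≠ (x,y).2 ∧ (x,y).1 ≠ r ∧ (x,y).2 ≠ r ∧
        tf f (x,y).1 r (x,y).2 = 1) then (1:ℕ) else 0)
      = if x = r then 0 else cp f r x := by
    intro x
    by_cases hx : x = r
    · simp [hx]
    · rw [if_neg hx]
      unfold cp
      rw [card_filter]
      apply sum_congr rfl
      intro y _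
      refine if_congr ?_ rfl rfl
      constructor
      · rintro ⟨a, b, c, d⟩
        exact ⟨c, fun hyx => a hyx.symm, by rw [← tf_rot]; exact d⟩
      · rintro ⟨a, b, c⟩
        exact ⟨fun hxy => b hxy.symm, hx, a, by rw [tf_rot]; exact c⟩
  rw [sum_congr rfl (fun x _ => h1 x)]
  rw [← Finset.sum_erase (univ : Finset V) (f := fun x => if x = r then 0 else cp f r x)
    (by simp : (if r = r then 0 else cp f r r) = 0)]
  apply sum_congr rfl
  intro x hx
  rw [if_neg (mem_erase.mp hx).1]


lemma square_eq (f : V → V → ℤˣ) (hsymm : ∀ i j, f i j = f j i) (i j k l : V) :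
    f i j * f j k * f k l * f l i = tf f i j k * tf f i l k := by
  have h1 : tf f i j k * tf f i l k = (f i j * f j k * (f i l * f l k)) * (f k i * f k i) := by
    unfold tf; ac_rfl
  rw [h1, Int.units_mul_self, mul_one, hsymm i l, hsymm l k]
  ac_rfl

/-- the count of violated squares, fiberized -/
lemma hpO_eq (f : V → V → ℤˣ) (hsymm : ∀ i j, f i j = f j i) :
    (univ.filter (fun t : V × V × V × V => SqDistinct4 t ∧
        f t.1 t.2.1 * f t.2.1 t.2.2.1 * f t.2.2.1 t.2.2.2 * f t.2.2.2 t.1 ≠ 1)).card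
      = ∑ i : V, ∑ k ∈ univ.erase i, 2 * cm f i k * cp f i k := by
  rw [card_filter]
  rw [Fintype.sum_prod_type]
  have h0 : ∀ i : V, (∑ q : V × V × V, if (SqDistinct4 (i, q) ∧
        f (i, q).1 (i, q).2.1 * f (i, q).2.1 (i, q).2.2.1 * f (i, q).2.2.1 (i, q).2.2.2 *
          f (i, q).2.2.2 (i, q).1 ≠ 1) then (1:ℕ) else 0)
      = ∑ j : V, ∑ k : V, ∑ l : V, if (SqDistinct4 (i, j, k, l) ∧
          f i j * f j k * f k l * f l i ≠ 1) then (1:ℕ) else 0 := by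
    intro i
    rw [Fintype.sum_prod_type]
    apply sum_congr rfl; intro j _
    rw [Fintype.sum_prod_type]
  rw [sum_congr rfl (fun i _ => h0 i)]
  have h1 : ∀ i : V, (∑ j : V, ∑ k : V, ∑ l : V, if (SqDistinct4 (i, j, k, l) ∧
          f i j * f j k * f k l * f l i ≠ 1) then (1:ℕ) else 0)
      = ∑ k : V, ∑ j : V, ∑ l : V, if (SqDistinct4 (i, j, k, l) ∧
          f i j * f j k * f k l * f l i ≠ 1) then (1:ℕ) else 0 := fun i => Finset.sum_comm
  rw [sum_congr rfl (fun i _ => h1 i)]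
  apply sum_congr rfl; intro i _
  have h2 : ∀ k : V, (∑ j : V, ∑ l : V, if (SqDistinct4 (i, j, k, l) ∧
          f i j * f j k * f k l * f l i ≠ 1) then (1:ℕ) else 0)
      = if i = k then 0 else 2 * cm f i k * cp f i k := by
    intro k
    by_cases hik : i = k
    · subst hik
      rw [if_pos rfl]
      apply Finset.sum_eq_zero; intro j _
      apply Finset.sum_eq_zero; intro l _
      rw [if_neg]; rintro ⟨⟨-, hii, -⟩, -⟩; exact hii rfl
    · rw [if_neg hik]
      have key : ∀ j l : V, (SqDistinct4 (i, j, k, l) ∧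
            f i j * f j k * f k l * f l i ≠ 1)
          ↔ (((j ≠ i ∧ j ≠ k ∧ tf f i j k = -1) ∧ (l ≠ i ∧ l ≠ k ∧ tf f i l k = 1))
            ∨ ((j ≠ i ∧ j ≠ k ∧ tf f i j k = 1) ∧ (l ≠ i ∧ l ≠ k ∧ tf f i l k = -1))) := by
        intro j l
        constructor
        · rintro ⟨⟨hij, -, hil, hjk, -, hkl⟩, hprod⟩
          rw [square_eq f hsymm, mul_ne_one_iff] at hprod
          rcases Int.units_eq_one_or (tf f i j k) with e1 | e1 <;>
            rcases Int.units_eq_one_or (tf f i l k) with e2 | e2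
          · exact absurd (e1.trans e2.symm) hprod
          · exact Or.inr ⟨⟨Ne.symm hij, hjk, e1⟩, ⟨Ne.symm hil, Ne.symm hkl, e2⟩⟩
          · exact Or.inl ⟨⟨Ne.symm hij, hjk, e1⟩, ⟨Ne.symm hil, Ne.symm hkl, e2⟩⟩
          · exact absurd (e1.trans e2.symm) hprod
        · rintro (⟨⟨hji, hjk, e1⟩, ⟨hli, hlk, e2⟩⟩ | ⟨⟨hji, hjk, e1⟩, ⟨hli, hlk, e2⟩⟩) <;>
          · have hjl : j ≠ l := by
              intro hh; rw [hh, e2] at e1; exact absurd e1 (by decide)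
            refine ⟨⟨Ne.symm hji, hik, Ne.symm hli, hjk, hjl, Ne.symm hlk⟩, ?_⟩
            rw [square_eq f hsymm, mul_ne_one_iff, e1, e2]
            decide
      have excl : ∀ j l : V, ¬((((j ≠ i ∧ j ≠ k ∧ tf f i j k = -1) ∧ (l ≠ i ∧ l ≠ k ∧ tf f i l k = 1)))
          ∧ (((j ≠ i ∧ j ≠ k ∧ tf f i j k = 1) ∧ (l ≠ i ∧ l ≠ k ∧ tf f i l k = -1)))) := by
        rintro j l ⟨⟨⟨-, -, e1⟩, -⟩, ⟨⟨-, -, e2⟩, -⟩⟩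
        rw [e1] at e2; exact absurd e2 (by decide)
      calc (∑ j : V, ∑ l : V, if (SqDistinct4 (i, j, k, l) ∧
          f i j * f j k * f k l * f l i ≠ 1) then (1:ℕ) else 0)
          = ∑ j : V, ∑ l : V,
            ((if ((j ≠ i ∧ j ≠ k ∧ tf f i j k = -1) ∧ (l ≠ i ∧ l ≠ k ∧ tf f i l k = 1)) then (1:ℕ) else 0)
            + (if ((j ≠ i ∧ j ≠ k ∧ tf f i j k = 1) ∧ (l ≠ i ∧ l ≠ k ∧ tf f i l k = -1)) then (1:ℕ) else 0)) := by
            apply sum_congr rfl; intro j _; apply sum_congr rfl; intro l _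
            rw [if_congr (key j l) rfl rfl, boole_or (excl j l)]
        _ = cm f i k * cp f i k + cp f i k * cm f i k := by
            simp only [sum_add_distrib]
            congr 1
            · rw [show (cm f i k * cp f i k)
                  = (∑ j : V, if (j ≠ i ∧ j ≠ k ∧ tf f i j k = -1) then (1:ℕ) else 0)
                    * (∑ l : V, if (l ≠ i ∧ l ≠ k ∧ tf f i l k = 1) then (1:ℕ) else 0) by
                  unfold cm cp; rw [card_filter, card_filter]]
              rw [Finset.sum_mul_sum]
              apply sum_congr rfl; intro j _; apply sum_congr rfl; intro l _
              rw [boole_and]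
            · rw [show (cp f i k * cm f i k)
                  = (∑ j : V, if (j ≠ i ∧ j ≠ k ∧ tf f i j k = 1) then (1:ℕ) else 0)
                    * (∑ l : V, if (l ≠ i ∧ l ≠ k ∧ tf f i l k = -1) then (1:ℕ) else 0) by
                  unfold cm cp; rw [card_filter, card_filter]]
              rw [Finset.sum_mul_sum]
              apply sum_congr rfl; intro j _; apply sum_congr rfl; intro l _
              rw [boole_and]
        _ = 2 * cm f i k * cp f i k := by ring
  rw [sum_congr rfl (fun k _ => h2 k)]
  rw [← Finset.sum_erase (univ : Finset V)
    (f := fun k => if i = k then 0 else 2 * cm f i k * cp f i k)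
    (by simp : (if i = i then 0 else 2 * cm f i i * cp f i i) = 0)]
  apply sum_congr rfl
  intro k hk
  rw [if_neg (Ne.symm (mem_erase.mp hk).1)]


lemma nsq_eq :
    (univ.filter (SqDistinct4 (V := V))).card
      = (Fintype.card V) * (Fintype.card V - 1) * ((Fintype.card V - 2) * (Fintype.card V - 3)) := by
  rw [card_filter]
  rw [Fintype.sum_prod_type]
  have h0 : ∀ i : V, (∑ q : V × V × V, if SqDistinct4 (i, q) then (1:ℕ) else 0)
      = ∑ j : V, ∑ k : V, ∑ l : V, if SqDistinct4 (i, j, k, l) then (1:ℕ) else 0 := by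
    intro i
    rw [Fintype.sum_prod_type]
    apply sum_congr rfl; intro j _
    rw [Fintype.sum_prod_type]
  rw [sum_congr rfl (fun i _ => h0 i)]
  have h1 : ∀ i : V, (∑ j : V, ∑ k : V, ∑ l : V, if SqDistinct4 (i, j, k, l) then (1:ℕ) else 0)
      = ∑ k : V, ∑ j : V, ∑ l : V, if SqDistinct4 (i, j, k, l) then (1:ℕ) else 0 :=
    fun i => Finset.sum_comm
  rw [sum_congr rfl (fun i _ => h1 i)]
  have h2 : ∀ i k : V, (∑ j : V, ∑ l : V, if SqDistinct4 (i, j, k, l) then (1:ℕ) else 0)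
      = if i = k then 0 else (Fintype.card V - 2) * (Fintype.card V - 3) := by
    intro i k
    by_cases hik : i = k
    · subst hik
      rw [if_pos rfl]
      apply Finset.sum_eq_zero; intro j _
      apply Finset.sum_eq_zero; intro l _
      rw [if_neg]; rintro ⟨-, hii, -⟩; exact hii rfl
    · rw [if_neg hik]
      have h3 : ∀ j : V, (∑ l : V, if SqDistinct4 (i, j, k, l) then (1:ℕ) else 0)
          = if (j ≠ i ∧ j ≠ k) then (Fintype.card V - 3) else 0 := by
        intro j
        by_cases hj : j ≠ i ∧ j ≠ k
        · rw [if_pos hj]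
          have : ∀ l : V, (SqDistinct4 (i, j, k, l)) ↔ (l ≠ i ∧ l ≠ k ∧ l ≠ j) := by
            intro l
            constructor
            · rintro ⟨-, -, hil, -, hjl, hkl⟩
              exact ⟨Ne.symm hil, Ne.symm hkl, Ne.symm hjl⟩
            · rintro ⟨hli, hlk, hlj⟩
              exact ⟨Ne.symm hj.1, hik, Ne.symm hli, hj.2, Ne.symm hlj, Ne.symm hlk⟩
          rw [sum_congr rfl (fun l _ => if_congr (this l) rfl rfl), ← card_filter,
            card_filter_ne3 hj.1 hj.2 hik]
        · rw [if_neg hj]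
          apply Finset.sum_eq_zero; intro l _
          rw [if_neg]
          rintro ⟨hij, -, -, hjk, -, -⟩
          exact hj ⟨Ne.symm hij, hjk⟩
      rw [sum_congr rfl (fun j _ => h3 j)]
      rw [← Finset.sum_filter]
      rw [Finset.sum_const, card_filter_ne2 hik, smul_eq_mul]
  have h4 : ∀ i : V, (∑ k : V, ∑ j : V, ∑ l : V, if SqDistinct4 (i, j, k, l) then (1:ℕ) else 0)
      = (Fintype.card V - 1) * ((Fintype.card V - 2) * (Fintype.card V - 3)) := by
    intro i
    rw [sum_congr rfl (fun k _ => h2 i k)]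
    rw [← Finset.sum_erase (univ : Finset V)
      (f := fun k => if i = k then 0 else (Fintype.card V - 2) * (Fintype.card V - 3))
      (by simp : (if i = i then 0 else (Fintype.card V - 2) * (Fintype.card V - 3)) = 0)]
    rw [sum_congr rfl (fun k hk => if_neg (Ne.symm (mem_erase.mp hk).1))]
    rw [Finset.sum_const, smul_eq_mul, card_erase_of_mem (mem_univ i), Finset.card_univ]
  rw [sum_congr rfl (fun i _ => h4 i), Finset.sum_const, smul_eq_mul, Finset.card_univ, mul_assoc]


def WW (f : V → V → ℤˣ) : Finset (V × V × V) :=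
  univ.filter (fun τ => τ.2.1 ≠ τ.2.2 ∧ τ.2.1 ≠ τ.1 ∧ τ.2.2 ≠ τ.1 ∧
    gB f τ.1 τ.2.1 ≠ gB f τ.1 τ.2.2)

def Phi (f : V → V → ℤˣ) : Finset (V × V × V) :=
  univ.filter (fun φ => φ.1 ≠ φ.2.1 ∧ φ.2.2 ≠ φ.1 ∧ φ.2.2 ≠ φ.2.1 ∧
    (decide (tf f φ.1 φ.2.2 φ.2.1 = -1) ≠ gB f φ.1 φ.2.1))

lemma WW_card (f : V → V → ℤˣ) : (WW f).card = ∑ r : V, 2 * dgT f r * dgF f r := by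
  unfold WW
  rw [card_filter]
  rw [Fintype.sum_prod_type]
  apply sum_congr rfl; intro r _
  rw [Fintype.sum_prod_type]
  have key : ∀ x y : V, (((x,y).1 ≠ (x,y).2 ∧ (x,y).1 ≠ r ∧ (x,y).2 ≠ r ∧
        gB f r (x,y).1 ≠ gB f r (x,y).2)
      ↔ (((x ≠ r ∧ gB f r x = true) ∧ (y ≠ r ∧ gB f r y = false))
        ∨ ((x ≠ r ∧ gB f r x = false) ∧ (y ≠ r ∧ gB f r y = true)))) := by
    intro x y
    show ((x ≠ y ∧ x ≠ r ∧ y ≠ r ∧ gB f r x ≠ gB f r y) ↔ _)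
    constructor
    · rintro ⟨hxy, hxr, hyr, hg⟩
      rcases Bool.eq_false_or_eq_true (gB f r x) with hx | hx <;>
        rcases Bool.eq_false_or_eq_true (gB f r y) with hy | hy
      all_goals first
        | exact absurd (hx.trans hy.symm) hg
        | exact Or.inr ⟨⟨hxr, hx⟩, ⟨hyr, hy⟩⟩
        | exact Or.inl ⟨⟨hxr, hx⟩, ⟨hyr, hy⟩⟩
    · rintro (⟨⟨hxr, hx⟩, ⟨hyr, hy⟩⟩ | ⟨⟨hxr, hx⟩, ⟨hyr, hy⟩⟩) <;>
      · refine ⟨?_, hxr, hyr, ?_⟩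
        · intro hh
          rw [hh, hy] at hx
          simp at hx
        · rw [hx, hy]
          simp
  have excl : ∀ x y : V, ¬((((x ≠ r ∧ gB f r x = true) ∧ (y ≠ r ∧ gB f r y = false)))
      ∧ (((x ≠ r ∧ gB f r x = false) ∧ (y ≠ r ∧ gB f r y = true)))) := by
    rintro x y ⟨⟨⟨-, h1⟩, -⟩, ⟨⟨-, h2⟩, -⟩⟩
    rw [h1] at h2; exact absurd h2 (by simp)
  calc (∑ x : V, ∑ y : V, if ((x,y).1 ≠ (x,y).2 ∧ (x,y).1 ≠ r ∧ (x,y).2 ≠ r ∧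
        gB f r (x,y).1 ≠ gB f r (x,y).2) then (1:ℕ) else 0)
      = ∑ x : V, ∑ y : V,
        ((if ((x ≠ r ∧ gB f r x = true) ∧ (y ≠ r ∧ gB f r y = false)) then (1:ℕ) else 0)
        + (if ((x ≠ r ∧ gB f r x = false) ∧ (y ≠ r ∧ gB f r y = true)) then (1:ℕ) else 0)) := by
        apply sum_congr rfl; intro x _; apply sum_congr rfl; intro y _
        rw [if_congr (key x y) rfl rfl, boole_or (excl x y)]
    _ = dgT f r * dgF f r + dgF f r * dgT f r := by
        simp only [sum_add_distrib]
        congr 1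
        · rw [show dgT f r * dgF f r
              = (∑ x : V, if (x ≠ r ∧ gB f r x = true) then (1:ℕ) else 0)
                * (∑ y : V, if (y ≠ r ∧ gB f r y = false) then (1:ℕ) else 0) by
              unfold dgT dgF; rw [card_filter, card_filter]]
          rw [Finset.sum_mul_sum]
          apply sum_congr rfl; intro x _; apply sum_congr rfl; intro y _
          rw [boole_and]
        · rw [show dgF f r * dgT f r
              = (∑ x : V, if (x ≠ r ∧ gB f r x = false) then (1:ℕ) else 0)
                * (∑ y : V, if (y ≠ r ∧ gB f r y = true) then (1:ℕ) else 0) by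
              unfold dgT dgF; rw [card_filter, card_filter]]
          rw [Finset.sum_mul_sum]
          apply sum_congr rfl; intro x _; apply sum_congr rfl; intro y _
          rw [boole_and]
    _ = 2 * dgT f r * dgF f r := by ring

lemma Phi_card (f : V → V → ℤˣ) : (Phi f).card = BB f := by
  unfold Phi BB
  rw [card_filter]
  rw [Fintype.sum_prod_type]
  apply sum_congr rfl; intro i _
  have h0 : (∑ q : V × V, if (i ≠ q.1 ∧ q.2 ≠ i ∧ q.2 ≠ q.1 ∧
        (decide (tf f i q.2 q.1 = -1) ≠ gB f i q.1)) then (1:ℕ) else 0)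
      = ∑ k : V, ∑ j : V, if (i ≠ k ∧ j ≠ i ∧ j ≠ k ∧
          (decide (tf f i j k = -1) ≠ gB f i k)) then (1:ℕ) else 0 := by
    rw [Fintype.sum_prod_type]
  rw [h0]
  have h1 : ∀ k : V, (∑ j : V, if (i ≠ k ∧ j ≠ i ∧ j ≠ k ∧
        (decide (tf f i j k = -1) ≠ gB f i k)) then (1:ℕ) else 0)
      = if i = k then 0 else gam f i k := by
    intro k
    by_cases hik : i = k
    · rw [if_pos hik]
      apply Finset.sum_eq_zero; intro j _
      rw [if_neg]; rintro ⟨hne, -⟩; exact hne hik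
    · rw [if_neg hik]
      rcases Bool.eq_false_or_eq_true (gB f i k) with hg | hg
      · -- hg : gB f i k = true
        have hcp : cp f i k ≤ cm f i k := by
          unfold gB at hg
          exact of_decide_eq_true hg
        have key : ∀ j : V, ((i ≠ k ∧ j ≠ i ∧ j ≠ k ∧
              (decide (tf f i j k = -1) ≠ gB f i k))
            ↔ (j ≠ i ∧ j ≠ k ∧ tf f i j k = 1)) := by
          intro j
          rw [hg]
          constructor
          · rintro ⟨-, ha, hb, hc⟩
            have hc' : decide (tf f i j k = -1) = false := by
              revert hc; cases (decide (tf f i j k = -1)) <;> simp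
            rw [decide_eq_false_iff_not] at hc'
            exact ⟨ha, hb, u_ne_negone.mp hc'⟩
          · rintro ⟨ha, hb, hc⟩
            refine ⟨hik, ha, hb, ?_⟩
            have hne : ¬(tf f i j k = -1) := by rw [hc]; decide
            rw [decide_eq_false hne]
            simp
        rw [sum_congr rfl (fun j _ => if_congr (key j) rfl rfl), ← card_filter]
        unfold gam
        rw [min_eq_right hcp]
        rfl
      · -- hg : gB f i k = false
        have hcm : cm f i k ≤ cp f i k := by
          unfold gB at hg
          rw [decide_eq_false_iff_not] at hg
          omega
        have key : ∀ j : V, ((i ≠ k ∧ j ≠ i ∧ j ≠ k ∧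
              (decide (tf f i j k = -1) ≠ gB f i k))
            ↔ (j ≠ i ∧ j ≠ k ∧ tf f i j k = -1)) := by
          intro j
          rw [hg]
          constructor
          · rintro ⟨-, ha, hb, hc⟩
            have hc' : decide (tf f i j k = -1) = true := by
              revert hc; cases (decide (tf f i j k = -1)) <;> simp
            exact ⟨ha, hb, of_decide_eq_true hc'⟩
          · rintro ⟨ha, hb, hc⟩
            refine ⟨hik, ha, hb, ?_⟩
            rw [decide_eq_true hc]
            simp
        rw [sum_congr rfl (fun j _ => if_congr (key j) rfl rfl), ← card_filter]
        unfold gam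
        rw [min_eq_left hcm]
        rfl
  rw [sum_congr rfl (fun k _ => h1 k)]
  rw [← Finset.sum_erase (univ : Finset V)
    (f := fun k => if i = k then 0 else gam f i k)
    (by simp : (if i = i then 0 else gam f i i) = 0)]
  apply sum_congr rfl
  intro k hk
  rw [if_neg (Ne.symm (mem_erase.mp hk).1)]


lemma WW_le (f : V → V → ℤˣ) (hsymm : ∀ i j, f i j = f j i) :
    (WW f).card ≤ 2 * (Phi f).card := by
  classical
  set F : V × V × V → V × V × V := fun τ =>
    if (decide (tf f τ.1 τ.2.2 τ.2.1 = -1) ≠ gB f τ.1 τ.2.1) then τ else (τ.1, τ.2.2, τ.2.1)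
    with hF
  apply Finset.card_le_mul_card_image_of_maps_to (f := F) (t := Phi f)
  · rintro ⟨r, x, y⟩ hτ
    rw [WW, mem_filter] at hτ
    obtain ⟨-, hxy, hxr, hyr, hg⟩ := hτ
    by_cases hc : (decide (tf f r y x = -1) ≠ gB f r x)
    · have : F (r, x, y) = (r, x, y) := if_pos hc
      rw [this, Phi, mem_filter]
      exact ⟨mem_univ _, Ne.symm hxr, hyr, Ne.symm hxy, hc⟩
    · have : F (r, x, y) = (r, y, x) := if_neg hc
      rw [this, Phi, mem_filter]
      push_neg at hc
      refine ⟨mem_univ _, Ne.symm hyr, hxr, hxy, ?_⟩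
      show decide (tf f r x y = -1) ≠ gB f r y
      rw [show tf f r x y = tf f r y x from tf_swap f hsymm r x y]
      rw [hc]
      exact hg
  · intro b _
    have hsub : (WW f).filter (fun τ => F τ = b) ⊆ {b, (b.1, b.2.2, b.2.1)} := by
      intro τ hτ
      rw [mem_filter] at hτ
      obtain ⟨-, hFb⟩ := hτ
      rw [Finset.mem_insert, Finset.mem_singleton]
      by_cases hc : (decide (tf f τ.1 τ.2.2 τ.2.1 = -1) ≠ gB f τ.1 τ.2.1)
      · left; rw [← hFb]; exact (if_pos hc).symm
      · right
        have h2 : F τ = (τ.1, τ.2.2, τ.2.1) := if_neg hc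
        rw [← hFb, h2]
    calc ((WW f).filter (fun τ => F τ = b)).card ≤ ({b, (b.1, b.2.2, b.2.1)} : Finset (V×V×V)).card :=
          Finset.card_le_card hsub
      _ ≤ 2 := by
          refine (Finset.card_insert_le _ _).trans ?_
          simp

lemma dg_sum (f : V → V → ℤˣ) (r : V) : dgT f r + dgF f r = Fintype.card V - 1 := by
  unfold dgT dgF
  rw [card_filter, card_filter, ← sum_add_distrib]
  have e : ∀ x : V, ((if x ≠ r ∧ gB f r x = true then (1:ℕ) else 0)
      + (if x ≠ r ∧ gB f r x = false then (1:ℕ) else 0)) = if x ≠ r then 1 else 0 := by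
    intro x
    rcases Bool.eq_false_or_eq_true (gB f r x) with h1 | h1 <;>
      by_cases hx : x ≠ r <;> simp [h1, hx]
  rw [sum_congr rfl (fun x _ => e x), ← card_filter]
  rw [show (univ.filter fun x => x ≠ r) = univ.erase r from by ext x; simp [mem_erase]]
  rw [card_erase_of_mem (mem_univ r), Finset.card_univ]

lemma filterT_eq (f : V → V → ℤˣ) (r : V) :
    (univ.erase r).filter (fun x => gB f r x = true) = univ.filter (fun x => x ≠ r ∧ gB f r x = true) := by
  ext x; simp [mem_erase, mem_filter]

lemma filterF_eq (f : V → V → ℤˣ) (r : V) :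
    (univ.erase r).filter (fun x => ¬(gB f r x = true)) = univ.filter (fun x => x ≠ r ∧ gB f r x = false) := by
  ext x; simp [mem_erase, mem_filter, Bool.not_eq_true]

lemma step1 (f : V → V → ℤˣ) (r : V) :
    min (Dm f r) (Dp f r) ≤ (∑ x ∈ univ.erase r, gam f r x)
      + (Fintype.card V - 2) * min (dgT f r) (dgF f r) := by
  rcases le_total (dgT f r) (dgF f r) with hmin | hmin
  · rw [min_eq_left hmin]
    calc min (Dm f r) (Dp f r) ≤ Dm f r := min_le_left _ _
      _ = ∑ x ∈ univ.erase r, cm f r x := Dm_eq f r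
      _ = (∑ x ∈ (univ.erase r).filter (fun x => gB f r x = true), cm f r x)
          + ∑ x ∈ (univ.erase r).filter (fun x => ¬(gB f r x = true)), cm f r x :=
            (sum_filter_add_sum_filter_not _ _ _).symm
      _ ≤ (Fintype.card V - 2) * dgT f r + ∑ x ∈ univ.erase r, gam f r x := by
          apply add_le_add
          · calc (∑ x ∈ (univ.erase r).filter (fun x => gB f r x = true), cm f r x)
                ≤ ∑ _x ∈ (univ.erase r).filter (fun x => gB f r x = true), (Fintype.card V - 2) := by
                  apply sum_le_sum
                  intro x hx
                  have hxr : x ≠ r := (mem_erase.mp (mem_of_mem_filter x hx)).1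
                  exact cm_le f (Ne.symm hxr)
              _ = (Fintype.card V - 2) * dgT f r := by
                  rw [sum_const, smul_eq_mul, filterT_eq]
                  unfold dgT
                  ring
          · calc (∑ x ∈ (univ.erase r).filter (fun x => ¬(gB f r x = true)), cm f r x)
                = ∑ x ∈ (univ.erase r).filter (fun x => ¬(gB f r x = true)), gam f r x := by
                  apply sum_congr rfl
                  intro x hx
                  have hg : gB f r x = false := Bool.not_eq_true _ |>.mp (mem_filter.mp hx).2
                  have hcm : cm f r x ≤ cp f r x := by
                    unfold gB at hg
                    rw [decide_eq_false_iff_not] at hg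
                    omega
                  unfold gam
                  rw [min_eq_left hcm]
              _ ≤ ∑ x ∈ univ.erase r, gam f r x := sum_le_sum_of_subset (filter_subset _ _)
      _ = (∑ x ∈ univ.erase r, gam f r x) + (Fintype.card V - 2) * dgT f r := by ring
  · rw [min_eq_right hmin]
    calc min (Dm f r) (Dp f r) ≤ Dp f r := min_le_right _ _
      _ = ∑ x ∈ univ.erase r, cp f r x := Dp_eq f r
      _ = (∑ x ∈ (univ.erase r).filter (fun x => ¬(gB f r x = true)), cp f r x)
          + ∑ x ∈ (univ.erase r).filter (fun x => gB f r x = true), cp f r x := by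
            rw [add_comm]
            exact (sum_filter_add_sum_filter_not _ _ _).symm
      _ ≤ (Fintype.card V - 2) * dgF f r + ∑ x ∈ univ.erase r, gam f r x := by
          apply add_le_add
          · calc (∑ x ∈ (univ.erase r).filter (fun x => ¬(gB f r x = true)), cp f r x)
                ≤ ∑ _x ∈ (univ.erase r).filter (fun x => ¬(gB f r x = true)), (Fintype.card V - 2) := by
                  apply sum_le_sum
                  intro x hx
                  have hxr : x ≠ r := (mem_erase.mp (mem_of_mem_filter x hx)).1
                  exact cp_le f (Ne.symm hxr)
              _ = (Fintype.card V - 2) * dgF f r := by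
                  rw [sum_const, smul_eq_mul, filterF_eq]
                  unfold dgF
                  ring
          · calc (∑ x ∈ (univ.erase r).filter (fun x => gB f r x = true), cp f r x)
                = ∑ x ∈ (univ.erase r).filter (fun x => gB f r x = true), gam f r x := by
                  apply sum_congr rfl
                  intro x hx
                  have hg : gB f r x = true := (mem_filter.mp hx).2
                  have hcp : cp f r x ≤ cm f r x := by
                    unfold gB at hg
                    exact of_decide_eq_true hg
                  unfold gam
                  rw [min_eq_right hcp]
              _ ≤ ∑ x ∈ univ.erase r, gam f r x := sum_le_sum_of_subset (filter_subset _ _)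
      _ = (∑ x ∈ univ.erase r, gam f r x) + (Fintype.card V - 2) * dgF f r := by ring

lemma total_le (f : V → V → ℤˣ) (hsymm : ∀ i j, f i j = f j i) (h6 : 6 ≤ Fintype.card V) :
    (∑ r : V, ((∑ x ∈ univ.erase r, gam f r x)
      + (Fintype.card V - 2) * min (dgT f r) (dgF f r))) ≤ 3 * BB f := by
  rw [sum_add_distrib]
  have h1 : (∑ r : V, ∑ x ∈ univ.erase r, gam f r x) = BB f := rfl
  have key0 : ∀ r : V, (Fintype.card V - 1) * min (dgT f r) (dgF f r) ≤ 2 * (dgT f r * dgF f r) := by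
    intro r
    have hd := dg_sum f r
    rw [← hd]
    rcases le_total (dgT f r) (dgF f r) with h | h
    · rw [min_eq_left h]; nlinarith [h]
    · rw [min_eq_right h]; nlinarith [h]
  have key1 : (Fintype.card V - 1) * (∑ r : V, (Fintype.card V - 2) * min (dgT f r) (dgF f r))
      ≤ (Fintype.card V - 1) * (2 * BB f) := by
    calc (Fintype.card V - 1) * (∑ r : V, (Fintype.card V - 2) * min (dgT f r) (dgF f r))
        = (Fintype.card V - 2) * (∑ r : V, (Fintype.card V - 1) * min (dgT f r) (dgF f r)) := by
          rw [Finset.mul_sum, Finset.mul_sum]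
          apply sum_congr rfl
          intro r _
          ring
      _ ≤ (Fintype.card V - 2) * (∑ r : V, 2 * (dgT f r * dgF f r)) :=
          Nat.mul_le_mul_left _ (sum_le_sum (fun r _ => key0 r))
      _ = (Fintype.card V - 2) * (WW f).card := by
          rw [WW_card]
          congr 1
          apply sum_congr rfl
          intro r _
          ring
      _ ≤ (Fintype.card V - 2) * (2 * (Phi f).card) := Nat.mul_le_mul_left _ (WW_le f hsymm)
      _ = (Fintype.card V - 2) * (2 * BB f) := by rw [Phi_card]
      _ ≤ (Fintype.card V - 1) * (2 * BB f) := Nat.mul_le_mul_right _ (by omega)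
  have key2 : (∑ r : V, (Fintype.card V - 2) * min (dgT f r) (dgF f r)) ≤ 2 * BB f :=
    Nat.le_of_mul_le_mul_left key1 (by omega)
  omega


lemma units_shuffle : ∀ a c d e : ℤˣ, (a ≠ e * c * d ↔ c * d * a ≠ e) := by decide

end ST19

open ST19

theorem stmt_19 {V : Type*} [Fintype V] [DecidableEq V] (h6 : 6 ≤ Fintype.card V)
    (f : V → V → ℤˣ) (hsymm : ∀ i j, f i j = f j i) (p : ℚ)
    (hp : ((Finset.univ.filter (fun t : V × V × V × V => SqDistinct4 t ∧
        f t.1 t.2.1 * f t.2.1 t.2.2.1 * f t.2.2.1 t.2.2.2 * f t.2.2.2 t.1 ≠ 1)).card : ℚ)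
      ≤ p * ((Finset.univ.filter (fun t : V × V × V × V => SqDistinct4 t)).card : ℚ)) :
    ∃ (θ : ℤˣ) (α : V → ℤˣ),
      ((Finset.univ.filter (fun t : V × V => t.1 ≠ t.2 ∧
          f t.1 t.2 ≠ θ * α t.1 * α t.2)).card : ℚ)
        ≤ 3 * p * ((Finset.univ.filter (fun t : V × V => t.1 ≠ t.2)).card : ℚ) := by
  classical
  set n := Fintype.card V with hn
  have hV : (univ : Finset V).Nonempty := by
    rw [← Finset.card_pos, Finset.card_univ]; omega
  obtain ⟨r₀, -, hr₀⟩ := Finset.exists_min_image univ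
    (fun r => (∑ x ∈ univ.erase r, gam f r x) + (n - 2) * min (dgT f r) (dgF f r)) hV
  have hterm : n * ((∑ x ∈ univ.erase r₀, gam f r₀ x)
      + (n - 2) * min (dgT f r₀) (dgF f r₀)) ≤ 3 * BB f := by
    calc n * ((∑ x ∈ univ.erase r₀, gam f r₀ x) + (n - 2) * min (dgT f r₀) (dgF f r₀))
        = ∑ _r : V, ((∑ x ∈ univ.erase r₀, gam f r₀ x)
            + (n - 2) * min (dgT f r₀) (dgF f r₀)) := by
          rw [sum_const, Finset.card_univ, smul_eq_mul]
      _ ≤ ∑ r : V, ((∑ x ∈ univ.erase r, gam f r x)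
            + (n - 2) * min (dgT f r) (dgF f r)) := sum_le_sum (fun r _ => hr₀ r (mem_univ r))
      _ ≤ 3 * BB f := total_le f hsymm h6
  have hb : n * min (Dm f r₀) (Dp f r₀) ≤ 3 * BB f :=
    le_trans (Nat.mul_le_mul_left n (step1 f r₀)) hterm
  have hBO : (n - 2) * BB f
      ≤ (Finset.univ.filter (fun t : V × V × V × V => SqDistinct4 t ∧
          f t.1 t.2.1 * f t.2.1 t.2.2.1 * f t.2.2.1 t.2.2.2 * f t.2.2.2 t.1 ≠ 1)).card := by
    rw [hpO_eq f hsymm]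
    rw [BB, Finset.mul_sum]
    apply sum_le_sum; intro i _
    rw [Finset.mul_sum]
    apply sum_le_sum; intro k hk
    have hik : i ≠ k := Ne.symm (mem_erase.mp hk).1
    have hsum := cm_add_cp f hik
    rw [← hn] at hsum
    rw [← hsum]
    unfold gam
    rcases le_total (cm f i k) (cp f i k) with h | h
    · rw [min_eq_left h]; nlinarith [h]
    · rw [min_eq_right h]; nlinarith [h]
  have hmain : n * (n - 2) * min (Dm f r₀) (Dp f r₀)
      ≤ 3 * (Finset.univ.filter (fun t : V × V × V × V => SqDistinct4 t ∧
          f t.1 t.2.1 * f t.2.1 t.2.2.1 * f t.2.2.1 t.2.2.2 * f t.2.2.2 t.1 ≠ 1)).card := by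
    calc n * (n - 2) * min (Dm f r₀) (Dp f r₀)
        = (n - 2) * (n * min (Dm f r₀) (Dp f r₀)) := by ring
      _ ≤ (n - 2) * (3 * BB f) := Nat.mul_le_mul_left _ hb
      _ = 3 * ((n - 2) * BB f) := by ring
      _ ≤ 3 * _ := Nat.mul_le_mul_left _ hBO
  set θ : ℤˣ := if Dm f r₀ ≤ Dp f r₀ then 1 else -1 with hθ
  set α : V → ℤˣ := fun x => if x = r₀ then θ else f r₀ x with hα
  refine ⟨θ, α, ?_⟩
  -- pointwise characterization of bad pairs
  have hpoint : ∀ x y : V, ((x ≠ y ∧ f x y ≠ θ * α x * α y)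
      ↔ (x ≠ y ∧ x ≠ r₀ ∧ y ≠ r₀ ∧ tf f x r₀ y ≠ θ)) := by
    intro x y
    by_cases hx : x = r₀
    · constructor
      · rintro ⟨hxy, hbad⟩
        exfalso
        apply hbad
        have hyr : y ≠ r₀ := by rw [← hx]; exact Ne.symm hxy
        simp only [hα]
        rw [if_pos hx, if_neg hyr, hx, Int.units_mul_self, one_mul]
      · rintro ⟨-, hxr, -, -⟩; exact absurd hx hxr
    · by_cases hy : y = r₀
      · constructor
        · rintro ⟨hxy, hbad⟩
          exfalso
          apply hbad
          simp only [hα]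
          rw [if_pos hy, if_neg hx, hy, hsymm x r₀,
            show θ * f r₀ x * θ = θ * θ * f r₀ x from by ac_rfl,
            Int.units_mul_self, one_mul]
        · rintro ⟨-, -, hyr, -⟩; exact absurd hy hyr
      · constructor
        · rintro ⟨hxy, hbad⟩
          refine ⟨hxy, hx, hy, ?_⟩
          simp only [hα] at hbad
          rw [if_neg hx, if_neg hy] at hbad
          have h2 := (units_shuffle (f x y) (f r₀ x) (f r₀ y) θ).mp hbad
          rw [show tf f x r₀ y = f r₀ x * f r₀ y * f x y from by
            unfold tf; rw [hsymm x r₀, hsymm y x]]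
          exact h2
        · rintro ⟨hxy, -, -, hbad⟩
          refine ⟨hxy, ?_⟩
          simp only [hα]
          rw [if_neg hx, if_neg hy]
          apply (units_shuffle (f x y) (f r₀ x) (f r₀ y) θ).mpr
          rw [show f r₀ x * f r₀ y * f x y = tf f x r₀ y from by
            unfold tf; rw [hsymm x r₀, hsymm y x]]
          exact hbad
  have hbadeq : (univ.filter fun t : V × V => t.1 ≠ t.2 ∧ f t.1 t.2 ≠ θ * α t.1 * α t.2).card
      = min (Dm f r₀) (Dp f r₀) := by
    have hset : (univ.filter fun t : V × V => t.1 ≠ t.2 ∧ f t.1 t.2 ≠ θ * α t.1 * α t.2)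
        = univ.filter (fun t : V × V => t.1 ≠ t.2 ∧ t.1 ≠ r₀ ∧ t.2 ≠ r₀ ∧ tf f t.1 r₀ t.2 ≠ θ) := by
      ext ⟨x, y⟩
      simp only [mem_filter, mem_univ, true_and]
      exact hpoint x y
    rw [hset]
    by_cases hDm : Dm f r₀ ≤ Dp f r₀
    · rw [min_eq_left hDm]
      have : θ = 1 := by rw [hθ, if_pos hDm]
      rw [this]
      unfold Dm
      congr 1
      ext ⟨x, y⟩
      simp only [mem_filter, mem_univ, true_and]
      constructor
      · rintro ⟨a, b, c, d⟩; exact ⟨a, b, c, u_ne_one.mp d⟩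
      · rintro ⟨a, b, c, d⟩; exact ⟨a, b, c, u_ne_one.mpr d⟩
    · rw [min_eq_right (le_of_not_ge hDm)]
      have : θ = -1 := by rw [hθ, if_neg hDm]
      rw [this]
      unfold Dp
      congr 1
      ext ⟨x, y⟩
      simp only [mem_filter, mem_univ, true_and]
      constructor
      · rintro ⟨a, b, c, d⟩; exact ⟨a, b, c, u_ne_negone.mp d⟩
      · rintro ⟨a, b, c, d⟩; exact ⟨a, b, c, u_ne_negone.mpr d⟩
  have hpair : (univ.filter fun t : V × V => t.1 ≠ t.2).card = n * (n - 1) := by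
    rw [card_filter, Fintype.sum_prod_type]
    have e : ∀ x : V, (∑ y : V, if (x, y).1 ≠ (x, y).2 then (1:ℕ) else 0) = n - 1 := by
      intro x
      rw [show (∑ y : V, if (x, y).1 ≠ (x, y).2 then (1:ℕ) else 0)
          = ∑ y : V, if x ≠ y then 1 else 0 from rfl, ← card_filter, Finset.filter_ne,
        card_erase_of_mem (mem_univ x), Finset.card_univ]
    rw [sum_congr rfl (fun x _ => e x), sum_const, Finset.card_univ, smul_eq_mul]
  rw [hbadeq, hpair]
  -- endgame over ℚ
  have hNsq : ((Finset.univ.filter (fun t : V × V × V × V => SqDistinct4 t)).card : ℚ)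
      = (n : ℚ) * ((n : ℚ) - 1) * (((n : ℚ) - 2) * ((n : ℚ) - 3)) := by
    rw [nsq_eq, ← hn]
    push_cast [Nat.cast_sub (by omega : 1 ≤ n), Nat.cast_sub (by omega : 2 ≤ n),
      Nat.cast_sub (by omega : 3 ≤ n)]
    ring
  have hN6 : (6 : ℚ) ≤ (n : ℚ) := by exact_mod_cast h6
  have hNsqpos : (0 : ℚ) < ((Finset.univ.filter (fun t : V × V × V × V => SqDistinct4 t)).card : ℚ) := by
    rw [hNsq]
    have l1 : (0:ℚ) < (n : ℚ) - 3 := by linarith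
    have l2 : (0:ℚ) < (n : ℚ) - 2 := by linarith
    have l3 : (0:ℚ) < (n : ℚ) - 1 := by linarith
    have l4 : (0:ℚ) < (n : ℚ) := by linarith
    exact mul_pos (mul_pos l4 l3) (mul_pos l2 l1)
  have hp0 : 0 ≤ p := by
    by_contra hneg
    push_neg at hneg
    have h1 : p * ((Finset.univ.filter (fun t : V × V × V × V => SqDistinct4 t)).card : ℚ) < 0 :=
      mul_neg_of_neg_of_pos hneg hNsqpos
    have h2 : (0:ℚ) ≤ ((Finset.univ.filter (fun t : V × V × V × V => SqDistinct4 t ∧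
        f t.1 t.2.1 * f t.2.1 t.2.2.1 * f t.2.2.1 t.2.2.2 * f t.2.2.2 t.1 ≠ 1)).card : ℚ) := by
      positivity
    linarith
  set b : ℕ := min (Dm f r₀) (Dp f r₀) with hbdef
  have hcast : ((n : ℚ) * ((n : ℚ) - 2)) * (b : ℚ)
      ≤ 3 * (p * ((n : ℚ) * ((n : ℚ) - 1) * (((n : ℚ) - 2) * ((n : ℚ) - 3)))) := by
    have hc1 : ((n * (n - 2) * b : ℕ) : ℚ)
        ≤ (3 : ℚ) * ((Finset.univ.filter (fun t : V × V × V × V => SqDistinct4 t ∧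
            f t.1 t.2.1 * f t.2.1 t.2.2.1 * f t.2.2.1 t.2.2.2 * f t.2.2.2 t.1 ≠ 1)).card : ℚ) := by
      exact_mod_cast hmain
    have hc2 : ((n * (n - 2) * b : ℕ) : ℚ) = (n : ℚ) * ((n : ℚ) - 2) * (b : ℚ) := by
      push_cast [Nat.cast_sub (by omega : 2 ≤ n)]
      ring
    rw [hc2] at hc1
    calc (n : ℚ) * ((n : ℚ) - 2) * (b : ℚ) ≤ 3 * ((Finset.univ.filter
          (fun t : V × V × V × V => SqDistinct4 t ∧
            f t.1 t.2.1 * f t.2.1 t.2.2.1 * f t.2.2.1 t.2.2.2 * f t.2.2.2 t.1 ≠ 1)).card : ℚ) := hc1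
      _ ≤ 3 * (p * ((Finset.univ.filter (fun t : V × V × V × V => SqDistinct4 t)).card : ℚ)) := by
          linarith [hp]
      _ = 3 * (p * ((n : ℚ) * ((n : ℚ) - 1) * (((n : ℚ) - 2) * ((n : ℚ) - 3)))) := by rw [hNsq]
  have hb2 : (b : ℚ) ≤ 3 * p * (((n : ℚ) - 1) * ((n : ℚ) - 3)) := by
    have hpos : (0 : ℚ) < (n : ℚ) * ((n : ℚ) - 2) := by nlinarith [hN6]
    have h3 : ((n : ℚ) * ((n : ℚ) - 2)) * (b : ℚ)
        ≤ ((n : ℚ) * ((n : ℚ) - 2)) * (3 * p * (((n : ℚ) - 1) * ((n : ℚ) - 3))) := by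
      calc ((n : ℚ) * ((n : ℚ) - 2)) * (b : ℚ)
          ≤ 3 * (p * ((n : ℚ) * ((n : ℚ) - 1) * (((n : ℚ) - 2) * ((n : ℚ) - 3)))) := hcast
        _ = ((n : ℚ) * ((n : ℚ) - 2)) * (3 * p * (((n : ℚ) - 1) * ((n : ℚ) - 3))) := by ring
    exact le_of_mul_le_mul_left h3 hpos
  have hfin : 3 * p * (((n : ℚ) - 1) * ((n : ℚ) - 3)) ≤ 3 * p * ((n : ℚ) * ((n : ℚ) - 1)) := by
    have hle : (((n : ℚ) - 1) * ((n : ℚ) - 3)) ≤ ((n : ℚ) * ((n : ℚ) - 1)) := by nlinarith [hN6]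
    exact mul_le_mul_of_nonneg_left hle (by linarith)
  have hcastpair : ((n * (n - 1) : ℕ) : ℚ) = (n : ℚ) * ((n : ℚ) - 1) := by
    push_cast [Nat.cast_sub (by omega : 1 ≤ n)]
    ring
  rw [hcastpair]
  linarith [hb2, hfin]
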